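/- Let G be a countable group acting by measurable, measure-preserving bijections on a measure space (Y, μ) with μ a finite measure. Let H₁ ≤ H₂ be subgroups of G with H₁ of infinite index in H₂, and let U ⊆ Y be a measurable subset with μ(U) > 0. Then there exists a measurable subset U' ⊆ U with μ(U') > 0 such that for every y ∈ U', the collection of right cosets {H₁h : h ∈ H₂ and h·y ∈ U} is infinite. -/

import Mathlib

open MeasureTheory
open scoped ENNReal

private lemma exists_coset_seq {G : Type*} [Group G] (H₁ H₂ : Subgroup G)
    (hinf : H₁.relIndex H₂ = 0) :
    ∃ g : ℕ → G, (∀ n, g n ∈ H₂) ∧ ∀ m n, g m * (g n)⁻¹ ∈ H₁ → m = n := by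
  have hinfQ : Infinite (H₂ ⧸ H₁.subgroupOf H₂) := by
    rw [Subgroup.relIndex, Subgroup.index] at hinf
    rcases Nat.card_eq_zero.mp hinf with h | h
    · exact (h.false (QuotientGroup.mk 1)).elim
    · exact h
  let e := Infinite.natEmbedding (H₂ ⧸ H₁.subgroupOf H₂)
  choose k hk using fun n => QuotientGroup.mk_surjective (e n)
  refine ⟨fun n => ((k n)⁻¹ : H₂), fun n => ((k n)⁻¹).2, ?_⟩
  intro m n hmem
  have hG : ((k m)⁻¹ * k n : H₂) ∈ H₁.subgroupOf H₂ := by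
    rw [Subgroup.mem_subgroupOf]
    simpa using hmem
  have : (e m : H₂ ⧸ H₁.subgroupOf H₂) = e n := by
    rw [← hk m, ← hk n]
    exact (QuotientGroup.eq ).mpr hG
  exact e.injective this

theorem actionLike_cocycle_of_pmp_action {G : Type*} [Group G] [Countable G]
    {Y : Type*} [MeasurableSpace Y] (μ : Measure Y) [IsFiniteMeasure μ]
    [MulAction G Y]
    (hmeas : ∀ g : G, Measurable (fun y : Y => g • y))
    (hpres : ∀ g : G, MeasurePreserving (fun y : Y => g • y) μ μ)
    (H₁ H₂ : Subgroup G) (hle : H₁ ≤ H₂) (hinf : H₁.relIndex H₂ = 0)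
    (U : Set Y) (hU : MeasurableSet U) (hUpos : 0 < μ U) :
    ∃ U' : Set Y, U' ⊆ U ∧ MeasurableSet U' ∧ 0 < μ U' ∧
      ∀ y ∈ U',
        {s : Set G | ∃ h : G, h ∈ H₂ ∧ h • y ∈ U ∧
          s = (fun x : G => x * h) '' (H₁ : Set G)}.Infinite := by
  classical
  -- the "bad" sets: points of U whose coset set is captured by the finite set F
  set W : Finset G → Set Y := fun F =>
    U ∩ ⋂ h : G, {y : Y | h ∈ H₂ → h • y ∈ U → ∃ c ∈ F, h * c⁻¹ ∈ H₁} with hWdef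
  have hWsubU : ∀ F, W F ⊆ U := fun F => Set.inter_subset_left
  have hWmeas : ∀ F, MeasurableSet (W F) := by
    intro F
    refine hU.inter (MeasurableSet.iInter fun h => ?_)
    by_cases h1 : h ∈ H₂
    · by_cases h2 : ∃ c ∈ F, h * c⁻¹ ∈ H₁
      · have : {y : Y | h ∈ H₂ → h • y ∈ U → ∃ c ∈ F, h * c⁻¹ ∈ H₁} = Set.univ := by
          ext y; simp [h2]
        rw [this]; exact MeasurableSet.univ
      · have : {y : Y | h ∈ H₂ → h • y ∈ U → ∃ c ∈ F, h * c⁻¹ ∈ H₁}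
            = ((fun y : Y => h • y) ⁻¹' U)ᶜ := by
          ext y; simp [h1, h2]
        rw [this]; exact ((hmeas h) hU).compl
    · have : {y : Y | h ∈ H₂ → h • y ∈ U → ∃ c ∈ F, h * c⁻¹ ∈ H₁} = Set.univ := by
        ext y; simp [h1]
      rw [this]; exact MeasurableSet.univ
  -- each W F is null
  have hWnull : ∀ F : Finset G, μ (W F) = 0 := by
    intro F
    by_contra hne
    obtain ⟨g, hgH₂, hginj⟩ := exists_coset_seq H₁ H₂ hinf
    set B : ℕ → Set Y := fun n => (fun y : Y => g n • y) ⁻¹' (W F) with hBdef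
    have hBmeas : ∀ n, MeasurableSet (B n) := fun n => (hmeas (g n)) (hWmeas F)
    have hBμ : ∀ n, μ (B n) = μ (W F) := fun n =>
      (hpres (g n)).measure_preimage (hWmeas F).nullMeasurableSet
    -- key combinatorial fact
    have key : ∀ (x : Y) (n m : ℕ), x ∈ B n → x ∈ B m →
        ∃ c ∈ F, (g m * (g n)⁻¹) * c⁻¹ ∈ H₁ := by
      intro x n m hxn hxm
      have hyn : g n • x ∈ W F := hxn
      have hym : g m • x ∈ U := hWsubU F hxm
      have h2 : g m * (g n)⁻¹ ∈ H₂ := H₂.mul_mem (hgH₂ m) (H₂.inv_mem (hgH₂ n))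
      have hsm : (g m * (g n)⁻¹) • (g n • x) = g m • x := by
        rw [smul_smul, inv_mul_cancel_right]
      have := hyn.2
      have hmem := Set.mem_iInter.mp this (g m * (g n)⁻¹)
      exact hmem h2 (by rw [hsm]; exact hym)
    -- multiplicity bound
    have hmult : ∀ (N : ℕ) (x : Y),
        ((Finset.range N).filter (fun n => x ∈ B n)).card ≤ F.card := by
      intro N x
      set T := (Finset.range N).filter (fun n => x ∈ B n) with hT
      rcases T.eq_empty_or_nonempty with hTe | ⟨n₀, hn₀⟩
      · simp [hTe]
      have hxn₀ : x ∈ B n₀ := (Finset.mem_filter.mp hn₀).2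
      have hc : ∀ m ∈ T, ∃ c ∈ F, (g m * (g n₀)⁻¹) * c⁻¹ ∈ H₁ := by
        intro m hm
        exact key x n₀ m hxn₀ (Finset.mem_filter.mp hm).2
      choose! c hcF hcH using hc
      refine Finset.card_le_card_of_injOn c (fun m hm => hcF m hm) ?_
      intro m hm m' hm' hcc
      have h1 := hcH m hm
      have h2 := hcH m' hm'
      rw [hcc] at h1
      have : g m * (g m')⁻¹ ∈ H₁ := by
        have := H₁.mul_mem h1 (H₁.inv_mem h2)
        have heq : (g m * (g n₀)⁻¹ * (c m')⁻¹) * (g m' * (g n₀)⁻¹ * (c m')⁻¹)⁻¹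
            = g m * (g m')⁻¹ := by group
        rwa [heq] at this
      exact hginj m m' this
    -- integrate
    have hsum : ∀ N : ℕ, (N : ℝ≥0∞) * μ (W F) ≤ (F.card : ℝ≥0∞) * μ (Set.univ : Set Y) := by
      intro N
      have h1 : ∑ n ∈ Finset.range N, μ (B n)
          = ∫⁻ x, ∑ n ∈ Finset.range N, (B n).indicator (1 : Y → ℝ≥0∞) x ∂μ := by
        rw [lintegral_finset_sum _ (fun n _ => measurable_one.indicator (hBmeas n))]
        refine Finset.sum_congr rfl fun n _ => ?_
        rw [lintegral_indicator_one (hBmeas n)]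
      have h2 : ∫⁻ x, ∑ n ∈ Finset.range N, (B n).indicator (1 : Y → ℝ≥0∞) x ∂μ
          ≤ ∫⁻ _, (F.card : ℝ≥0∞) ∂μ := by
        refine lintegral_mono fun x => ?_
        have : ∑ n ∈ Finset.range N, (B n).indicator (1 : Y → ℝ≥0∞) x
            = (((Finset.range N).filter (fun n => x ∈ B n)).card : ℝ≥0∞) := by
          rw [Finset.card_filter]
          push_cast
          refine Finset.sum_congr rfl fun n _ => ?_
          by_cases hx : x ∈ B n <;> simp [Set.indicator_apply, hx]
        rw [this]
        exact (Nat.cast_le (α := ℝ≥0∞)).mpr (hmult N x)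
      have h3 : ∑ n ∈ Finset.range N, μ (B n) = (N : ℝ≥0∞) * μ (W F) := by
        simp [hBμ, Finset.sum_const, mul_comm]
      rw [lintegral_const] at h2
      calc (N : ℝ≥0∞) * μ (W F) = ∑ n ∈ Finset.range N, μ (B n) := h3.symm
        _ ≤ (F.card : ℝ≥0∞) * μ Set.univ := h1 ▸ h2
    -- contradiction
    have htop : (⊤ : ℝ≥0∞) ≤ (F.card : ℝ≥0∞) * μ Set.univ := by
      have h4 : (⨆ N : ℕ, (N : ℝ≥0∞) * μ (W F)) ≤ (F.card : ℝ≥0∞) * μ Set.univ :=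
        iSup_le hsum
      rwa [← ENNReal.iSup_mul, ENNReal.iSup_natCast, ENNReal.top_mul hne] at h4
    have : (F.card : ℝ≥0∞) * μ Set.univ < ⊤ :=
      ENNReal.mul_lt_top (by simp) (measure_lt_top μ _)
    exact absurd (lt_of_le_of_lt htop this) (lt_irrefl _)
  -- assemble
  set U' : Set Y := U \ ⋃ F : Finset G, W F with hU'def
  have hUnion : μ (⋃ F : Finset G, W F) = 0 := measure_iUnion_null hWnull
  refine ⟨U', Set.diff_subset, hU.diff (MeasurableSet.iUnion fun F => hWmeas F), ?_, ?_⟩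
  · have : μ U' = μ U := measure_diff_null hUnion
    rw [this]; exact hUpos
  · intro y hy hfin
    -- choose representatives of each coset in the (finite) set
    set S : Set (Set G) := {s : Set G | ∃ h : G, h ∈ H₂ ∧ h • y ∈ U ∧
        s = (fun x : G => x * h) '' (H₁ : Set G)} with hSdef
    have hSfin : S.Finite := hfin
    set rep : Set G → G := fun s =>
      if hs : ∃ h : G, h ∈ H₂ ∧ h • y ∈ U ∧ s = (fun x : G => x * h) '' (H₁ : Set G)
      then hs.choose else 1 with hrep
    set F : Finset G := hSfin.toFinset.image rep with hF
    have hyW : y ∈ W F := by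
      refine ⟨hy.1, Set.mem_iInter.mpr fun h => ?_⟩
      intro hh2 hhU
      have hsS : (fun x : G => x * h) '' (H₁ : Set G) ∈ S := ⟨h, hh2, hhU, rfl⟩
      set s := (fun x : G => x * h) '' (H₁ : Set G) with hs
      have hex : ∃ h' : G, h' ∈ H₂ ∧ h' • y ∈ U ∧
          s = (fun x : G => x * h') '' (H₁ : Set G) := hsS
      have hrepval : rep s = hex.choose := by simp only [hrep]; rw [dif_pos hex]
      obtain ⟨_, _, hseq⟩ := hex.choose_spec
      refine ⟨rep s, Finset.mem_image_of_mem rep (hSfin.mem_toFinset.mpr hsS), ?_⟩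
      -- h ∈ s = H₁ * choose, so h * (choose)⁻¹ ∈ H₁
      have hhs : h ∈ s := ⟨1, H₁.one_mem, one_mul h⟩
      rw [hseq] at hhs
      obtain ⟨u, huH₁, hu⟩ := hhs
      rw [hrepval]
      have : h * hex.choose⁻¹ = u := by
        simp only at hu
        rw [← hu]; group
      rw [this]; exact huH₁
    exact hy.2 (Set.mem_iUnion.mpr ⟨F, hyW⟩)
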